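/- (Corollary: nonlinear Youla-type parametrization for stable linear systems, sufficiency.) Let p ∈ [1,∞), let A ∈ ℝ^{n×n} have spectral radius strictly less than 1, and let B ∈ ℝ^{n×m}. Consider the linear plant x_0 = w_0, x_t = A x_{t−1} + B u_{t−1} + w_t for t ≥ 1, and let M be any causal, ℓ_p-stable operator from ℝ^n-valued to ℝ^m-valued sequences. Define the control input by ŵ_0 = x_0, ŵ_t = x_t − A x_{t−1} − B u_{t−1} for t ≥ 1, and u = M(ŵ). Then for every w ∈ ℓ_p the resulting closed-loop trajectories satisfy x ∈ ℓ_p and u ∈ ℓ_p. -/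

import Mathlib

/-- An operator on sequences is causal if its output at time `t` depends only on
inputs up to time `t`. -/
def Causal {E F : Type*} (A : (ℕ → E) → (ℕ → F)) : Prop :=
  ∀ x y : ℕ → E, ∀ t : ℕ, (∀ s ≤ t, x s = y s) → A x t = A y t

/-- An operator on sequences is strictly causal if its output at time `t` depends only on
inputs strictly before time `t`. -/
def StrictlyCausal {E F : Type*} (A : (ℕ → E) → (ℕ → F)) : Prop :=
  ∀ x y : ℕ → E, ∀ t : ℕ, (∀ s < t, x s = y s) → A x t = A y t

/-- A two-argument operator on sequences is strictly causal in its joint argument. -/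
def StrictlyCausal2 {E E' F : Type*} (A : (ℕ → E) → (ℕ → E') → (ℕ → F)) : Prop :=
  ∀ x x' : ℕ → E, ∀ u u' : ℕ → E', ∀ t : ℕ,
    (∀ s < t, x s = x' s) → (∀ s < t, u s = u' s) → A x u t = A x' u' t

/-- A sequence belongs to `ℓ_p` if the `p`-th powers of the norms are summable. -/
def InLp (p : ℝ) {E : Type*} [Norm E] (x : ℕ → E) : Prop :=
  Summable fun t => ‖x t‖ ^ p

/-- The `ℓ_p` norm of a sequence. -/
noncomputable def lpNorm (p : ℝ) {E : Type*} [Norm E] (x : ℕ → E) : ℝ :=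
  (∑' t, ‖x t‖ ^ p) ^ (1 / p)

open Finset
open scoped ENNReal NNReal

attribute [local instance] Matrix.linftyOpNormedAddCommGroup Matrix.linftyOpNormedRing
  Matrix.linftyOpNormedAlgebra

private lemma youla_rpow_nonneg {a p : ℝ} (ha : 0 ≤ a) : 0 ≤ a ^ p :=
  Real.rpow_nonneg ha p

/-- comparison lemma for `InLp` -/
private lemma youla_inlp_of_le {E F : Type*} [NormedAddCommGroup E] [NormedAddCommGroup F]
    {p : ℝ} (hp : 1 ≤ p) {x : ℕ → E} {y : ℕ → F} {K : ℝ} (hK : 0 ≤ K)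
    (hx : InLp p x) (h : ∀ t, ‖y t‖ ≤ K * ‖x t‖) : InLp p y := by
  have hp0 : (0:ℝ) ≤ p := le_trans zero_le_one hp
  refine Summable.of_nonneg_of_le (fun t => youla_rpow_nonneg (norm_nonneg _))
    (fun t => ?_) (hx.mul_left (K ^ p))
  calc ‖y t‖ ^ p ≤ (K * ‖x t‖) ^ p :=
        Real.rpow_le_rpow (norm_nonneg _) (h t) hp0
    _ = K ^ p * ‖x t‖ ^ p := Real.mul_rpow hK (norm_nonneg _)

private lemma youla_inlp_add {E : Type*} [NormedAddCommGroup E]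
    {p : ℝ} (hp : 1 ≤ p) {x y : ℕ → E}
    (hx : InLp p x) (hy : InLp p y) : InLp p (fun t => x t + y t) := by
  have hp0 : (0:ℝ) ≤ p := le_trans zero_le_one hp
  refine Summable.of_nonneg_of_le (fun t => youla_rpow_nonneg (norm_nonneg _))
    (fun t => ?_) (((hx.add hy)).mul_left ((2:ℝ) ^ p))
  have h1 : ‖x t + y t‖ ≤ 2 * max ‖x t‖ ‖y t‖ := by
    refine (norm_add_le _ _).trans ?_
    rw [two_mul]
    exact add_le_add (le_max_left _ _) (le_max_right _ _)
  have hmax : (0:ℝ) ≤ max ‖x t‖ ‖y t‖ := le_trans (norm_nonneg _) (le_max_left _ _)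
  calc ‖x t + y t‖ ^ p ≤ (2 * max ‖x t‖ ‖y t‖) ^ p :=
        Real.rpow_le_rpow (norm_nonneg _) h1 hp0
    _ = 2 ^ p * (max ‖x t‖ ‖y t‖) ^ p := Real.mul_rpow (by norm_num) hmax
    _ ≤ 2 ^ p * (‖x t‖ ^ p + ‖y t‖ ^ p) := by
        refine mul_le_mul_of_nonneg_left ?_ (youla_rpow_nonneg (by norm_num))
        rcases max_cases ‖x t‖ ‖y t‖ with ⟨h, _⟩ | ⟨h, _⟩ <;> rw [h]
        · exact le_add_of_nonneg_right (youla_rpow_nonneg (norm_nonneg _))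
        · exact le_add_of_nonneg_left (youla_rpow_nonneg (norm_nonneg _))

/-- The discrete convolution of an `ℓ_p` sequence with a geometric kernel is in `ℓ_p`. -/
private lemma youla_conv_summable {p : ℝ} (hp : 1 ≤ p) {r : ℝ} (hr0 : 0 ≤ r) (hr1 : r < 1)
    {b : ℕ → ℝ} (hb0 : ∀ t, 0 ≤ b t) (hb : Summable fun t => b t ^ p) :
    Summable fun t => (∑ s ∈ Finset.range (t + 1), r ^ (t - s) * b s) ^ p := by
  have hp0 : (0:ℝ) < p := lt_of_lt_of_le zero_lt_one hp
  set c : ℕ → ℝ := fun t => ∑ s ∈ Finset.range (t + 1), r ^ (t - s) * b s with hc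
  have hc0 : ∀ t, 0 ≤ c t := fun t =>
    Finset.sum_nonneg fun s _ => mul_nonneg (pow_nonneg hr0 _) (hb0 s)
  have hcz : c 0 = b 0 := by simp [hc]
  have hcs : ∀ t, c (t + 1) = r * c t + b (t + 1) := by
    intro t
    have : c (t + 1) = (∑ s ∈ Finset.range (t + 1), r ^ (t + 1 - s) * b s)
        + r ^ (t + 1 - (t + 1)) * b (t + 1) := by
      rw [hc]; exact Finset.sum_range_succ _ _
    rw [this]
    simp only [Nat.sub_self, pow_zero, one_mul]
    congr 1
    rw [Finset.mul_sum]
    refine Finset.sum_congr rfl fun s hs => ?_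
    rw [Finset.mem_range] at hs
    have : t + 1 - s = (t - s) + 1 := by omega
    rw [this, pow_succ', mul_assoc]
  -- bound partial sums of c^p
  set β : ℝ := (∑' t, b t ^ p) ^ (1 / p) with hβ
  have hβ0 : 0 ≤ β := Real.rpow_nonneg (tsum_nonneg fun t => Real.rpow_nonneg (hb0 t) p) _
  have key : ∀ T, ∑ t ∈ Finset.range T, c t ^ p ≤ (β / (1 - r)) ^ p := by
    intro T
    set S : ℝ := ∑ t ∈ Finset.range T, c t ^ p with hS
    have hS0 : 0 ≤ S := Finset.sum_nonneg fun t _ => Real.rpow_nonneg (hc0 t) p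
    -- Minkowski
    set f : ℕ → ℝ := fun t => if t = 0 then 0 else r * c (t - 1) with hf
    have hfg : ∀ t, c t = f t + b t := by
      intro t
      cases t with
      | zero => simp [hf, hcz]
      | succ t => simp [hf, hcs t]
    have hmink : S ^ (1/p) ≤ (∑ t ∈ Finset.range T, |f t| ^ p) ^ (1/p)
        + (∑ t ∈ Finset.range T, |b t| ^ p) ^ (1/p) := by
      have := Real.Lp_add_le (Finset.range T) f b hp
      have hSe : S = ∑ t ∈ Finset.range T, |f t + b t| ^ p := by
        refine Finset.sum_congr rfl fun t _ => ?_
        rw [← hfg t, abs_of_nonneg (hc0 t)]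
      rw [hSe]
      exact this
    -- bound f-part
    have hfpart : (∑ t ∈ Finset.range T, |f t| ^ p) ≤ r ^ p * S := by
      cases T with
      | zero => simp [hS]
      | succ T =>
        rw [Finset.sum_range_succ']
        simp only [hf, if_neg (Nat.succ_ne_zero _), Nat.add_sub_cancel, if_pos rfl]
        rw [abs_zero, Real.zero_rpow (ne_of_gt hp0), add_zero]
        have : ∀ t ∈ Finset.range T, |r * c t| ^ p = r ^ p * c t ^ p := by
          intro t _
          rw [abs_of_nonneg (mul_nonneg hr0 (hc0 t)), Real.mul_rpow hr0 (hc0 t)]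
        rw [Finset.sum_congr rfl this, ← Finset.mul_sum]
        refine mul_le_mul_of_nonneg_left ?_ (Real.rpow_nonneg hr0 p)
        refine Finset.sum_le_sum_of_subset_of_nonneg ?_ (fun t _ _ => Real.rpow_nonneg (hc0 t) p)
        exact Finset.range_subset_range.2 (Nat.le_succ T)
    have hbpart : (∑ t ∈ Finset.range T, |b t| ^ p) ≤ ∑' t, b t ^ p := by
      have : ∀ t ∈ Finset.range T, |b t| ^ p = b t ^ p := fun t _ => by
        rw [abs_of_nonneg (hb0 t)]
      rw [Finset.sum_congr rfl this]
      exact Summable.sum_le_tsum _ (fun t _ => Real.rpow_nonneg (hb0 t) p) hb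
    have hfp' : (∑ t ∈ Finset.range T, |f t| ^ p) ^ (1/p) ≤ r * S ^ (1/p) := by
      have h1 : (∑ t ∈ Finset.range T, |f t| ^ p) ^ (1/p) ≤ (r ^ p * S) ^ (1/p) :=
        Real.rpow_le_rpow (Finset.sum_nonneg fun t _ => Real.rpow_nonneg (abs_nonneg _) p)
          hfpart (by positivity)
      calc (∑ t ∈ Finset.range T, |f t| ^ p) ^ (1/p) ≤ (r ^ p * S) ^ (1/p) := h1
        _ = r * S ^ (1/p) := by
            rw [Real.mul_rpow (Real.rpow_nonneg hr0 p) hS0, ← Real.rpow_mul hr0,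
              mul_one_div, div_self (ne_of_gt hp0), Real.rpow_one]
    have hbp' : (∑ t ∈ Finset.range T, |b t| ^ p) ^ (1/p) ≤ β := by
      rw [hβ]
      exact Real.rpow_le_rpow (Finset.sum_nonneg fun t _ => Real.rpow_nonneg (abs_nonneg _) p)
        hbpart (by positivity)
    have hy : S ^ (1/p) ≤ r * S ^ (1/p) + β := le_trans hmink (add_le_add hfp' hbp')
    have hy2 : S ^ (1/p) ≤ β / (1 - r) := by
      rw [le_div_iff₀ (by linarith)]
      nlinarith [Real.rpow_nonneg hS0 (1/p)]
    calc S = (S ^ (1/p)) ^ p := by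
          rw [one_div, Real.rpow_inv_rpow hS0 (ne_of_gt hp0)]
      _ ≤ (β / (1 - r)) ^ p :=
          Real.rpow_le_rpow (Real.rpow_nonneg hS0 _) hy2 (le_of_lt hp0)
  exact summable_of_sum_range_le (fun t => Real.rpow_nonneg (hc0 t) p) key

private lemma youla_map_norm {n : ℕ} (M : Matrix (Fin n) (Fin n) ℝ) :
    ‖M.map (algebraMap ℝ ℂ)‖ = ‖M‖ := by
  rw [← coe_nnnorm, ← coe_nnnorm]
  congr 1
  rw [Matrix.linfty_opNNNorm_def, Matrix.linfty_opNNNorm_def]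
  congr 1
  ext i
  congr 1
  refine Finset.sum_congr rfl fun j _ => ?_
  simp [Matrix.map_apply, Complex.coe_algebraMap]

/-- Geometric bound on the powers of a matrix whose spectral radius is `< 1`. -/
private lemma youla_geom_bound {n : ℕ} (hn : 0 < n) (A : Matrix (Fin n) (Fin n) ℝ)
    (hA : ∀ μ ∈ spectrum ℂ (A.map (algebraMap ℝ ℂ)), ‖μ‖ < 1) :
    ∃ C r : ℝ, 1 ≤ C ∧ 0 ≤ r ∧ r < 1 ∧ ∀ k : ℕ, ‖A ^ k‖ ≤ C * r ^ k := by
  haveI : Nonempty (Fin n) := ⟨⟨0, hn⟩⟩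
  set Ac : Matrix (Fin n) (Fin n) ℂ := A.map (algebraMap ℝ ℂ) with hAc
  have hrad : spectralRadius ℂ Ac < 1 := by
    have := spectrum.spectralRadius_lt_of_forall_lt Ac
      (r := 1) (fun z hz => by
        have := hA z hz
        exact_mod_cast this)
    simpa using this
  obtain ⟨r, hr1, hr2⟩ := ENNReal.lt_iff_exists_nnreal_btwn.1 hrad
  have hrpos : (0:ℝ≥0∞) < (r:ℝ≥0∞) := lt_of_le_of_lt zero_le hr1
  have hr0 : (0:ℝ≥0) < r := by exact_mod_cast hrpos
  have hrlt1 : (r:ℝ) < 1 := by exact_mod_cast hr2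
  -- Gelfand's formula
  have hG := spectrum.pow_nnnorm_pow_one_div_tendsto_nhds_spectralRadius Ac
  have hev : ∀ᶠ k : ℕ in Filter.atTop, (‖Ac ^ k‖₊ : ℝ≥0∞) ^ (1 / (k:ℝ)) < (r:ℝ≥0∞) :=
    hG.eventually_lt_const hr1
  obtain ⟨N, hN⟩ := Filter.eventually_atTop.1 hev
  have hpow : ∀ k, max N 1 ≤ k → ‖A ^ k‖ ≤ (r:ℝ) ^ k := by
    intro k hk
    have hk1 : 1 ≤ k := le_trans (le_max_right _ _) hk
    have hkN : N ≤ k := le_trans (le_max_left _ _) hk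
    have h := hN k hkN
    have hkne : (k:ℝ) ≠ 0 := Nat.cast_ne_zero.2 (by omega)
    have h2 : ((‖Ac ^ k‖₊ : ℝ≥0∞) ^ (1 / (k:ℝ))) ^ (k:ℝ) ≤ ((r:ℝ≥0∞)) ^ (k:ℝ) :=
      ENNReal.rpow_le_rpow h.le (by positivity)
    rw [← ENNReal.rpow_mul, one_div, inv_mul_cancel₀ hkne, ENNReal.rpow_one] at h2
    rw [ENNReal.rpow_natCast] at h2
    have h3 : ‖Ac ^ k‖₊ ≤ r ^ k := by
      rw [← ENNReal.coe_pow] at h2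
      exact_mod_cast h2
    have h4 : ‖Ac ^ k‖ ≤ (r:ℝ) ^ k := by
      rw [← coe_nnnorm]
      exact_mod_cast h3
    have h5 : Ac ^ k = (A ^ k).map (algebraMap ℝ ℂ) := by
      rw [hAc, ← RingHom.mapMatrix_apply, ← map_pow, RingHom.mapMatrix_apply]
    rw [← youla_map_norm (A ^ k), ← h5]
    exact h4
  set N' := max N 1 with hN'
  set C : ℝ := 1 + ∑ k ∈ Finset.range N', ‖A ^ k‖ / (r:ℝ) ^ k with hC
  have hrR : (0:ℝ) < (r:ℝ) := by exact_mod_cast hr0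
  have hC1 : 1 ≤ C := by
    rw [hC]
    have : 0 ≤ ∑ k ∈ Finset.range N', ‖A ^ k‖ / (r:ℝ) ^ k :=
      Finset.sum_nonneg fun k _ => div_nonneg (norm_nonneg _) (by positivity)
    linarith
  refine ⟨C, r, hC1, le_of_lt hrR, hrlt1, fun k => ?_⟩
  rcases lt_or_ge k N' with hkN' | hkN'
  · have hterm : ‖A ^ k‖ / (r:ℝ) ^ k ≤ C := by
      rw [hC]
      have h1 : ‖A ^ k‖ / (r:ℝ) ^ k ≤ ∑ j ∈ Finset.range N', ‖A ^ j‖ / (r:ℝ) ^ j :=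
        Finset.single_le_sum (f := fun j => ‖A ^ j‖ / (r:ℝ) ^ j)
          (fun j _ => div_nonneg (norm_nonneg _) (by positivity)) (Finset.mem_range.2 hkN')
      linarith
    calc ‖A ^ k‖ = (‖A ^ k‖ / (r:ℝ) ^ k) * (r:ℝ) ^ k := by
          field_simp
      _ ≤ C * (r:ℝ) ^ k := mul_le_mul_of_nonneg_right hterm (by positivity)
  · calc ‖A ^ k‖ ≤ (r:ℝ) ^ k := hpow k hkN'
      _ ≤ C * (r:ℝ) ^ k := by nlinarith [pow_pos hrR k]

/-- **Corollary: Youla-type parametrization for stable linear systems,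
sufficiency.** For an asymptotically stable linear plant and any causal `ℓ_p`-stable
operator `M`, the IMC control law `u = M(ŵ)` with `ŵ_0 = x_0`,
`ŵ_t = x_t − A x_{t−1} − B u_{t−1}` yields closed-loop trajectories in `ℓ_p` for every
`w ∈ ℓ_p`. -/
theorem linear_youla_sufficiency {n m : ℕ} (p : ℝ) (hp : 1 ≤ p)
    (A : Matrix (Fin n) (Fin n) ℝ) (B : Matrix (Fin n) (Fin m) ℝ)
    (hA : ∀ μ ∈ spectrum ℂ (A.map (algebraMap ℝ ℂ)), ‖μ‖ < 1)
    (M : (ℕ → Fin n → ℝ) → (ℕ → Fin m → ℝ)) (hM : Causal M)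
    (hMstable : ∀ v : ℕ → Fin n → ℝ, InLp p v → InLp p (M v)) :
    ∀ (w x what : ℕ → Fin n → ℝ) (u : ℕ → Fin m → ℝ), InLp p w →
      x 0 = w 0 →
      (∀ t : ℕ, x (t + 1) = A.mulVec (x t) + B.mulVec (u t) + w (t + 1)) →
      what 0 = x 0 →
      (∀ t : ℕ, what (t + 1) = x (t + 1) - A.mulVec (x t) - B.mulVec (u t)) →
      u = M what →
      InLp p x ∧ InLp p u := by
  intro w x what u hw hx0 hxd hwhat0 hwhatd hu
  have hp0 : (0:ℝ) < p := lt_of_lt_of_le zero_lt_one hp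
  -- the reconstructed disturbance is the true disturbance
  have hwe : what = w := by
    funext t
    cases t with
    | zero => rw [hwhat0, hx0]
    | succ t =>
      rw [hwhatd t, hxd t]
      abel
  have hupl : InLp p u := by
    rw [hu, hwe]
    exact hMstable w hw
  refine ⟨?_, hupl⟩
  rcases Nat.eq_zero_or_pos n with hn | hn
  · -- trivial case `n = 0`
    subst hn
    have hx : ∀ t, ‖x t‖ ^ p = 0 := by
      intro t
      have : x t = 0 := funext fun i => i.elim0
      rw [this, norm_zero, Real.zero_rpow (ne_of_gt hp0)]
    show Summable fun t => ‖x t‖ ^ p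
    simpa [hx] using summable_zero
  -- main case
  set d : ℕ → Fin n → ℝ :=
    fun t => Nat.casesOn t (w 0) (fun s => B.mulVec (u s) + w (s + 1)) with hd
  have hd0 : d 0 = w 0 := rfl
  have hds : ∀ s, d (s + 1) = B.mulVec (u s) + w (s + 1) := fun s => rfl
  have hdl : InLp p d := by
    have h1 : InLp p (fun s => B.mulVec (u s) : ℕ → Fin n → ℝ) := by
      refine youla_inlp_of_le hp (K := ‖B‖) (norm_nonneg _) hupl fun s => ?_
      exact Matrix.linfty_opNorm_mulVec _ _
    have h2 : InLp p (fun s => w (s + 1)) :=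
      (summable_nat_add_iff 1).2 hw
    have h3 : InLp p (fun s => d (s + 1)) := by
      simpa [hds] using youla_inlp_add hp h1 h2
    exact (summable_nat_add_iff 1).1 h3
  -- explicit solution formula
  have hxf : ∀ t, x t = ∑ s ∈ Finset.range (t + 1), (A ^ (t - s)).mulVec (d s) := by
    intro t
    induction t with
    | zero => simp [hx0, hd0, Matrix.one_mulVec]
    | succ t ih =>
      have hsum : A.mulVec (∑ s ∈ Finset.range (t + 1), (A ^ (t - s)).mulVec (d s))
          = ∑ s ∈ Finset.range (t + 1), A.mulVec ((A ^ (t - s)).mulVec (d s)) := by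
        simp only [← Matrix.mulVecLin_apply]
        exact map_sum _ _ _
      rw [hxd t, ih, hsum]
      rw [Finset.sum_range_succ (fun s => (A ^ (t + 1 - s)).mulVec (d s)) (t + 1)]
      have hlast : (A ^ (t + 1 - (t + 1))).mulVec (d (t + 1)) = B.mulVec (u t) + w (t + 1) := by
        rw [Nat.sub_self, pow_zero, Matrix.one_mulVec, hds t]
      rw [hlast]
      have hterm : ∀ s ∈ Finset.range (t + 1),
          A.mulVec ((A ^ (t - s)).mulVec (d s)) = (A ^ (t + 1 - s)).mulVec (d s) := by
        intro s hs
        rw [Finset.mem_range] at hs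
        rw [Matrix.mulVec_mulVec, show t + 1 - s = (t - s) + 1 by omega, pow_succ']
      rw [Finset.sum_congr rfl hterm]
      abel
  -- geometric bound and conclusion
  obtain ⟨C, r, hC1, hr0, hr1, hbound⟩ := youla_geom_bound hn A hA
  have hC0 : (0:ℝ) ≤ C := le_trans zero_le_one hC1
  set b : ℕ → ℝ := fun t => ‖d t‖ with hb
  have hb0 : ∀ t, 0 ≤ b t := fun t => norm_nonneg _
  have hxb : ∀ t, ‖x t‖ ≤ C * ∑ s ∈ Finset.range (t + 1), r ^ (t - s) * b s := by
    intro t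
    rw [hxf t]
    calc ‖∑ s ∈ Finset.range (t + 1), (A ^ (t - s)).mulVec (d s)‖
        ≤ ∑ s ∈ Finset.range (t + 1), ‖(A ^ (t - s)).mulVec (d s)‖ :=
          norm_sum_le _ _
      _ ≤ ∑ s ∈ Finset.range (t + 1), (C * r ^ (t - s)) * b s := by
          refine Finset.sum_le_sum fun s _ => ?_
          calc ‖(A ^ (t - s)).mulVec (d s)‖ ≤ ‖A ^ (t - s)‖ * ‖d s‖ :=
                Matrix.linfty_opNorm_mulVec _ _
            _ ≤ (C * r ^ (t - s)) * b s :=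
                mul_le_mul_of_nonneg_right (hbound _) (norm_nonneg _)
      _ = C * ∑ s ∈ Finset.range (t + 1), r ^ (t - s) * b s := by
          rw [Finset.mul_sum]
          exact Finset.sum_congr rfl fun s _ => by ring
  have hcs : Summable fun t => (∑ s ∈ Finset.range (t + 1), r ^ (t - s) * b s) ^ p :=
    youla_conv_summable hp hr0 hr1 hb0 hdl
  show Summable fun t => ‖x t‖ ^ p
  refine Summable.of_nonneg_of_le (fun t => Real.rpow_nonneg (norm_nonneg _) _)
    (fun t => ?_) (hcs.mul_left (C ^ p))
  have hcnn : 0 ≤ ∑ s ∈ Finset.range (t + 1), r ^ (t - s) * b s :=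
    Finset.sum_nonneg fun s _ => mul_nonneg (pow_nonneg hr0 _) (hb0 s)
  calc ‖x t‖ ^ p ≤ (C * ∑ s ∈ Finset.range (t + 1), r ^ (t - s) * b s) ^ p :=
        Real.rpow_le_rpow (norm_nonneg _) (hxb t) (le_of_lt hp0)
    _ = C ^ p * (∑ s ∈ Finset.range (t + 1), r ^ (t - s) * b s) ^ p :=
        Real.mul_rpow hC0 hcnn
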